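/- Target Score Identity with scaling: let α ≠ 0 and Y = αX + W, so that p_Y(y) = ∫ p_X(x) p_W(y − αx) dx and p_{X|Y}(x|y) = p_X(x) p_W(y − αx) / p_Y(y). Then for every y ∈ ℝ^d, ∇ log p_Y(y) = α^{-1} ∫ ∇ log p_X(x) · p_{X|Y}(x|y) dx. -/

import Mathlib

open MeasureTheory Real InnerProductSpace
open scoped RealInnerProductSpace

noncomputable section TSIAux

variable {d : ℕ}

private lemma tsi_integrable_of_integral_eq_one {f : (EuclideanSpace ℝ (Fin d)) → ℝ} (h : ∫ x, f x = 1) :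
    Integrable f := by
  by_contra hc
  rw [integral_undef hc] at h
  norm_num at h

private lemma tsi_grad_cont {f : (EuclideanSpace ℝ (Fin d)) → ℝ} (hf : ContDiff ℝ 1 f) :
    Continuous (gradient f) :=
  (toDual ℝ (EuclideanSpace ℝ (Fin d))).symm.continuous.comp (hf.continuous_fderiv one_ne_zero)

private lemma tsi_inner_grad (f : (EuclideanSpace ℝ (Fin d)) → ℝ) (x v : (EuclideanSpace ℝ (Fin d))) :
    ⟪gradient f x, v⟫_ℝ = fderiv ℝ f x v := by
  rw [← toDual_apply_apply, gradient, LinearIsometryEquiv.apply_symm_apply]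

private lemma tsi_ftc {f : (EuclideanSpace ℝ (Fin d)) → ℝ} (hf : ContDiff ℝ 1 f) (x u : (EuclideanSpace ℝ (Fin d))) :
    f (x + u) - f x = ∫ ξ in Set.Ioc (0:ℝ) 1, ⟪gradient f (x + ξ • u), u⟫_ℝ := by
  have hderiv : ∀ t : ℝ,
      HasDerivAt (fun ξ : ℝ => f (x + ξ • u)) (⟪gradient f (x + t • u), u⟫_ℝ) t := by
    intro t
    have h1 : HasDerivAt (fun ξ : ℝ => x + ξ • u) u t := by
      simpa using ((hasDerivAt_id t).smul_const u).const_add x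
    have h2 : HasFDerivAt f (fderiv ℝ f (x + t • u)) (x + t • u) :=
      (hf.differentiable one_ne_zero (x + t • u)).hasFDerivAt
    rw [tsi_inner_grad]
    exact h2.comp_hasDerivAt t h1
  have hcont : Continuous fun t : ℝ => ⟪gradient f (x + t • u), u⟫_ℝ :=
    (((tsi_grad_cont hf).comp
      (continuous_const.add (continuous_id.smul continuous_const)))).inner continuous_const
  have h := intervalIntegral.integral_eq_sub_of_hasDerivAt
    (f := fun ξ : ℝ => f (x + ξ • u)) (fun t _ => hderiv t)
    (hcont.intervalIntegrable 0 1)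
  rw [intervalIntegral.integral_of_le zero_le_one] at h
  rw [h]
  norm_num

private lemma tsi_log_grad {f : (EuclideanSpace ℝ (Fin d)) → ℝ} {G x : (EuclideanSpace ℝ (Fin d))} (hf : HasGradientAt f G x)
    (h0 : f x ≠ 0) :
    HasGradientAt (fun z => Real.log (f z)) ((f x)⁻¹ • G) x := by
  have h1 : HasFDerivAt f (toDual ℝ (EuclideanSpace ℝ (Fin d)) G) x := hf.hasFDerivAt
  have h3 := (Real.hasDerivAt_log h0).comp_hasFDerivAt x h1
  rw [hasGradientAt_iff_hasFDerivAt]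
  have : toDual ℝ (EuclideanSpace ℝ (Fin d)) ((f x)⁻¹ • G) = (f x)⁻¹ • toDual ℝ (EuclideanSpace ℝ (Fin d)) G := by
    ext v
    simp [toDual_apply_apply, real_inner_smul_left]
  rw [this]
  exact h3

variable {α : ℝ} {pX pW : (EuclideanSpace ℝ (Fin d)) → ℝ}

private lemma tsi_prod_integrable (hpX_diff : ContDiff ℝ 1 pX) (hpW_cont : Continuous pW)
    (hpW_nonneg : ∀ w, 0 ≤ pW w)
    (hInt : ∀ y, Integrable (fun x => ‖gradient pX x‖ * pW (y - α • x)))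
    {y u : (EuclideanSpace ℝ (Fin d))} {ε : ℝ} {g : (EuclideanSpace ℝ (Fin d)) → ℝ} (hg : Integrable g)
    (hbound : ∀ y', dist y' y < ε → ∀ x, ‖gradient pX x‖ * pW (y' - α • x) ≤ g x)
    (hu : ‖α • u‖ < ε) :
    Integrable (fun p : ℝ × (EuclideanSpace ℝ (Fin d)) => ⟪gradient pX (p.2 + p.1 • u), u⟫_ℝ * pW (y - α • p.2))
      ((volume.restrict (Set.Ioc (0:ℝ) 1)).prod volume) := by
  have hgradc := tsi_grad_cont hpX_diff
  have hcont : Continuous fun p : ℝ × (EuclideanSpace ℝ (Fin d)) =>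
      ⟪gradient pX (p.2 + p.1 • u), u⟫_ℝ * pW (y - α • p.2) := by
    refine Continuous.mul ?_ ?_
    · exact (hgradc.comp (continuous_snd.add (continuous_fst.smul continuous_const))).inner
        continuous_const
    · exact hpW_cont.comp (continuous_const.sub (continuous_snd.const_smul α))
  have harg : ∀ (ξ : ℝ) (x : (EuclideanSpace ℝ (Fin d))), y + ξ • (α • u) - α • (x + ξ • u) = y - α • x := by
    intro ξ x
    rw [smul_add, smul_comm α ξ u]
    abel
  have itg1 : ∀ ξ : ℝ, Integrable (fun x : (EuclideanSpace ℝ (Fin d)) => ‖gradient pX (x + ξ • u)‖ * pW (y - α • x)) := by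
    intro ξ
    have h := (hInt (y + ξ • (α • u))).comp_add_right (ξ • u)
    refine h.congr (Filter.Eventually.of_forall fun x => ?_)
    simp only [harg]
  have slice : ∀ ξ : ℝ, Integrable
      (fun x : (EuclideanSpace ℝ (Fin d)) => ⟪gradient pX (x + ξ • u), u⟫_ℝ * pW (y - α • x)) := by
    intro ξ
    refine ((itg1 ξ).const_mul ‖u‖).mono' ?_ (Filter.Eventually.of_forall fun x => ?_)
    · exact (((hgradc.comp (continuous_id.add continuous_const)).inner
        continuous_const).mul (hpW_cont.comp
          (continuous_const.sub (continuous_id.const_smul α)))).aestronglyMeasurable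
    · rw [norm_mul, Real.norm_eq_abs, Real.norm_eq_abs,
        abs_of_nonneg (hpW_nonneg _)]
      calc |⟪gradient pX (x + ξ • u), u⟫_ℝ| * pW (y - α • x)
          ≤ ‖gradient pX (x + ξ • u)‖ * ‖u‖ * pW (y - α • x) :=
            mul_le_mul_of_nonneg_right (abs_real_inner_le_norm _ _) (hpW_nonneg _)
        _ = ‖u‖ * (‖gradient pX (x + ξ • u)‖ * pW (y - α • x)) := by ring
  refine (integrable_prod_iff hcont.aestronglyMeasurable).mpr ⟨?_, ?_⟩
  · exact Filter.Eventually.of_forall fun ξ => slice ξ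
  · refine Integrable.mono' (g := fun _ => ‖u‖ * ∫ x, g x)
      (integrableOn_const measure_Ioc_lt_top.ne)
      hcont.aestronglyMeasurable.norm.integral_prod_right' ?_
    filter_upwards [ae_restrict_mem measurableSet_Ioc] with ξ hξ
    have hξ0 : (0:ℝ) < ξ := hξ.1
    have hξ1 : ξ ≤ 1 := hξ.2
    have hnn : 0 ≤ ∫ x, ‖⟪gradient pX (x + ξ • u), u⟫_ℝ * pW (y - α • x)‖ :=
      integral_nonneg fun x => norm_nonneg _
    rw [Real.norm_eq_abs, abs_of_nonneg hnn]
    have hb1 : ∀ x : (EuclideanSpace ℝ (Fin d)), ‖⟪gradient pX (x + ξ • u), u⟫_ℝ * pW (y - α • x)‖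
        ≤ ‖u‖ * (‖gradient pX (x + ξ • u)‖ * pW (y - α • x)) := by
      intro x
      rw [norm_mul, Real.norm_eq_abs, Real.norm_eq_abs, abs_of_nonneg (hpW_nonneg _)]
      calc |⟪gradient pX (x + ξ • u), u⟫_ℝ| * pW (y - α • x)
          ≤ ‖gradient pX (x + ξ • u)‖ * ‖u‖ * pW (y - α • x) :=
            mul_le_mul_of_nonneg_right (abs_real_inner_le_norm _ _) (hpW_nonneg _)
        _ = ‖u‖ * (‖gradient pX (x + ξ • u)‖ * pW (y - α • x)) := by ring
    calc (∫ x, ‖⟪gradient pX (x + ξ • u), u⟫_ℝ * pW (y - α • x)‖)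
        ≤ ∫ x, ‖u‖ * (‖gradient pX (x + ξ • u)‖ * pW (y - α • x)) :=
          integral_mono (slice ξ).norm (((itg1 ξ)).const_mul ‖u‖) hb1
      _ = ‖u‖ * ∫ x, ‖gradient pX (x + ξ • u)‖ * pW (y - α • x) := integral_const_mul _ _
      _ = ‖u‖ * ∫ x, ‖gradient pX x‖ * pW (y + ξ • (α • u) - α • x) := by
          congr 1
          rw [← integral_add_right_eq_self
            (fun x => ‖gradient pX x‖ * pW (y + ξ • (α • u) - α • x)) (ξ • u)]
          congr 1
          funext x
          rw [harg]
      _ ≤ ‖u‖ * ∫ x, g x := by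
          refine mul_le_mul_of_nonneg_left ?_ (norm_nonneg u)
          refine integral_mono (hInt _) hg ?_
          refine hbound (y + ξ • (α • u)) ?_
          have : dist (y + ξ • (α • u)) y = ‖ξ • (α • u)‖ := by
            rw [dist_eq_norm]
            congr 1
            abel
          rw [this, norm_smul, Real.norm_eq_abs, abs_of_pos hξ0]
          calc ξ * ‖α • u‖ ≤ 1 * ‖α • u‖ :=
                mul_le_mul_of_nonneg_right hξ1 (norm_nonneg _)
            _ = ‖α • u‖ := one_mul _
            _ < ε := hu

private lemma tsi_conv_integrable (hα : α ≠ 0) (hpX_diff : ContDiff ℝ 1 pX)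
    (hpW_cont : Continuous pW)
    (hpX_nonneg : ∀ x, 0 ≤ pX x) (hpW_nonneg : ∀ w, 0 ≤ pW w)
    (hpX_int : Integrable pX) (hpW_int : Integrable pW) (hpX_prob : ∫ x, pX x = 1)
    (hInt : ∀ y, Integrable (fun x => ‖gradient pX x‖ * pW (y - α • x)))
    (hDom : ∀ y, ∃ ε > 0, ∃ g : (EuclideanSpace ℝ (Fin d)) → ℝ, Integrable g ∧
      ∀ y', dist y' y < ε → ∀ x, ‖gradient pX x‖ * pW (y' - α • x) ≤ g x)
    (y : (EuclideanSpace ℝ (Fin d))) :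
    Integrable (fun x : (EuclideanSpace ℝ (Fin d)) => pX x * pW (y - α • x)) := by
  have hpXc : Continuous pX := hpX_diff.continuous
  obtain ⟨ε, hε, g, hg, hbound⟩ := hDom y
  -- integrability of the translated weight
  have IntW : Integrable (fun x : (EuclideanSpace ℝ (Fin d)) => pW (y - α • x)) := by
    have h1 : Integrable (fun x : (EuclideanSpace ℝ (Fin d)) => pW (y - x)) := hpW_int.comp_sub_left y
    exact (integrable_comp_smul_iff volume (fun z : (EuclideanSpace ℝ (Fin d)) => pW (y - z)) hα).mpr h1
  set r : ℝ := ε / (|α| + 1) with hr_def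
  have hαpos : (0:ℝ) < |α| + 1 := by positivity
  have hr : 0 < r := div_pos hε hαpos
  -- Tonelli argument to find a good shift u₀
  have hFcont : Continuous fun p : (EuclideanSpace ℝ (Fin d)) × (EuclideanSpace ℝ (Fin d)) => pX (p.2 + p.1) * pW (y - α • p.2) :=
    (hpXc.comp (continuous_snd.add continuous_fst)).mul
      (hpW_cont.comp (continuous_const.sub (continuous_snd.const_smul α)))
  have hFmeas : Measurable fun p : (EuclideanSpace ℝ (Fin d)) × (EuclideanSpace ℝ (Fin d)) => ENNReal.ofReal (pX (p.2 + p.1) * pW (y - α • p.2)) :=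
    hFcont.measurable.ennreal_ofReal
  have hprod : ∫⁻ p : (EuclideanSpace ℝ (Fin d)) × (EuclideanSpace ℝ (Fin d)), ENNReal.ofReal (pX (p.2 + p.1) * pW (y - α • p.2))
      ∂((volume.restrict (Metric.ball (0:(EuclideanSpace ℝ (Fin d))) r)).prod volume) ≠ ⊤ := by
    rw [lintegral_prod_symm' _ hFmeas]
    have key : ∀ x : (EuclideanSpace ℝ (Fin d)), (∫⁻ u in Metric.ball (0:(EuclideanSpace ℝ (Fin d))) r, ENNReal.ofReal (pX (x + u) * pW (y - α • x)))
        ≤ ENNReal.ofReal (pW (y - α • x)) := by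
      intro x
      have : ∀ u : (EuclideanSpace ℝ (Fin d)), ENNReal.ofReal (pX (x + u) * pW (y - α • x))
          = ENNReal.ofReal (pX (x + u)) * ENNReal.ofReal (pW (y - α • x)) := fun u =>
        ENNReal.ofReal_mul (hpX_nonneg _)
      have e : (∫⁻ u in Metric.ball (0:(EuclideanSpace ℝ (Fin d))) r, ENNReal.ofReal (pX (x + u) * pW (y - α • x)))
          = ∫⁻ u in Metric.ball (0:(EuclideanSpace ℝ (Fin d))) r,
              ENNReal.ofReal (pX (x + u)) * ENNReal.ofReal (pW (y - α • x)) :=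
        lintegral_congr fun u => this u
      have hm : Measurable fun u : (EuclideanSpace ℝ (Fin d)) => ENNReal.ofReal (pX (x + u)) :=
        (hpXc.comp (continuous_const.add continuous_id)).measurable.ennreal_ofReal
      rw [e, lintegral_mul_const _ hm]
      have h2 : (∫⁻ u in Metric.ball (0:(EuclideanSpace ℝ (Fin d))) r, ENNReal.ofReal (pX (x + u)))
          ≤ ∫⁻ u, ENNReal.ofReal (pX (x + u)) := setLIntegral_le_lintegral _ _
      have h3 : (∫⁻ u : (EuclideanSpace ℝ (Fin d)), ENNReal.ofReal (pX (x + u))) = ∫⁻ u : (EuclideanSpace ℝ (Fin d)), ENNReal.ofReal (pX u) := by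
        simpa [add_comm] using lintegral_add_right_eq_self (fun u : (EuclideanSpace ℝ (Fin d)) => ENNReal.ofReal (pX u)) x
      have h4 : (∫⁻ u : (EuclideanSpace ℝ (Fin d)), ENNReal.ofReal (pX u)) = 1 := by
        rw [← ofReal_integral_eq_lintegral_ofReal hpX_int
          (Filter.Eventually.of_forall hpX_nonneg)]
        rw [hpX_prob]
        exact ENNReal.ofReal_one
      calc (∫⁻ u in Metric.ball (0:(EuclideanSpace ℝ (Fin d))) r, ENNReal.ofReal (pX (x + u)))
            * ENNReal.ofReal (pW (y - α • x))
          ≤ (∫⁻ u : (EuclideanSpace ℝ (Fin d)), ENNReal.ofReal (pX (x + u))) * ENNReal.ofReal (pW (y - α • x)) :=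
            mul_le_mul_left h2 _
        _ = 1 * ENNReal.ofReal (pW (y - α • x)) := by rw [h3, h4]
        _ = ENNReal.ofReal (pW (y - α • x)) := one_mul _
    have hfin : (∫⁻ x : (EuclideanSpace ℝ (Fin d)), ENNReal.ofReal (pW (y - α • x))) < ⊤ := by
      rw [← hasFiniteIntegral_iff_ofReal (Filter.Eventually.of_forall fun x => hpW_nonneg _)]
      exact IntW.hasFiniteIntegral
    exact (lt_of_le_of_lt (lintegral_mono key) hfin).ne
  rw [lintegral_prod _ hFmeas.aemeasurable] at hprod
  have hae : ∀ᵐ u ∂(volume.restrict (Metric.ball (0:(EuclideanSpace ℝ (Fin d))) r)),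
      (∫⁻ x, ENNReal.ofReal (pX (x + u) * pW (y - α • x))) < ⊤ :=
    ae_lt_top hFmeas.lintegral_prod_right' hprod
  haveI : (ae (volume.restrict (Metric.ball (0:(EuclideanSpace ℝ (Fin d))) r))).NeBot := by
    rw [ae_neBot]
    intro hzero
    have h0 := Measure.restrict_eq_zero.mp hzero
    exact (Metric.measure_ball_pos volume (0:(EuclideanSpace ℝ (Fin d))) hr).ne' h0
  obtain ⟨u₀, hu₀fin, hu₀mem⟩ := (hae.and (ae_restrict_mem measurableSet_ball)).exists
  have hu₀ : ‖α • u₀‖ < ε := by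
    rw [norm_smul, Real.norm_eq_abs]
    have h1 : ‖u₀‖ < r := by
      simpa [Metric.mem_ball, dist_zero_right] using hu₀mem
    have hαa : (0:ℝ) < |α| := abs_pos.mpr hα
    calc |α| * ‖u₀‖ < |α| * r := by
          exact mul_lt_mul_of_pos_left h1 hαa
      _ ≤ (|α| + 1) * r := by nlinarith [hr.le]
      _ = ε := by
          rw [hr_def]
          field_simp
  have IntShift : Integrable (fun x : (EuclideanSpace ℝ (Fin d)) => pX (x + u₀) * pW (y - α • x)) := by
    refine ⟨((hpXc.comp (continuous_id.add continuous_const)).mul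
      (hpW_cont.comp (continuous_const.sub
        (continuous_id.const_smul α)))).aestronglyMeasurable, ?_⟩
    rw [hasFiniteIntegral_iff_ofReal (Filter.Eventually.of_forall fun x =>
      mul_nonneg (hpX_nonneg _) (hpW_nonneg _))]
    exact hu₀fin
  have prodInt := tsi_prod_integrable hpX_diff hpW_cont hpW_nonneg hInt hg hbound hu₀
  have corr0 : Integrable (fun x : (EuclideanSpace ℝ (Fin d)) => ∫ ξ in Set.Ioc (0:ℝ) 1,
      ⟪gradient pX (x + ξ • u₀), u₀⟫_ℝ * pW (y - α • x)) := prodInt.swap.integral_prod_left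
  have corr : Integrable (fun x : (EuclideanSpace ℝ (Fin d)) => (pX (x + u₀) - pX x) * pW (y - α • x)) := by
    refine corr0.congr (Filter.Eventually.of_forall fun x => ?_)
    show (∫ ξ in Set.Ioc (0:ℝ) 1, ⟪gradient pX (x + ξ • u₀), u₀⟫_ℝ * pW (y - α • x))
      = (pX (x + u₀) - pX x) * pW (y - α • x)
    rw [integral_mul_const, ← tsi_ftc hpX_diff x u₀]
  refine (IntShift.sub corr).congr (Filter.Eventually.of_forall fun x => ?_)
  simp only [Pi.sub_apply]
  ring


end TSIAux

theorem target_score_identity_scaled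
    (d : ℕ) (hd : 1 ≤ d) (α : ℝ) (hα : α ≠ 0)
    (pX pW : EuclideanSpace ℝ (Fin d) → ℝ)
    (hpX_pos : ∀ x, 0 < pX x) (hpW_pos : ∀ w, 0 < pW w)
    (hpX_diff : ContDiff ℝ 1 pX) (hpW_diff : ContDiff ℝ 1 pW)
    (hpX_prob : ∫ x, pX x = 1) (hpW_prob : ∫ w, pW w = 1)
    (pY : EuclideanSpace ℝ (Fin d) → ℝ)
    (hpY : ∀ y, pY y = ∫ x, pX x * pW (y - α • x))
    (pXgY : EuclideanSpace ℝ (Fin d) → EuclideanSpace ℝ (Fin d) → ℝ)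
    (hpXgY : ∀ x y, pXgY x y = pX x * pW (y - α • x) / pY y)
    (hInt : ∀ y, Integrable (fun x => ‖gradient pX x‖ * pW (y - α • x)))
    (hDom : ∀ y, ∃ ε > 0, ∃ g : EuclideanSpace ℝ (Fin d) → ℝ, Integrable g ∧
      ∀ y', dist y' y < ε → ∀ x, ‖gradient pX x‖ * pW (y' - α • x) ≤ g x) :
    ∀ y, gradient (fun y' => Real.log (pY y')) y
      = α⁻¹ • ∫ x, pXgY x y • gradient (fun x' => Real.log (pX x')) x := by
  intro y
  have hpXc : Continuous pX := hpX_diff.continuous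
  have hpWc : Continuous pW := hpW_diff.continuous
  have hgradc : Continuous (gradient pX) := tsi_grad_cont hpX_diff
  have hpX_int : Integrable pX := tsi_integrable_of_integral_eq_one hpX_prob
  have hpW_int : Integrable pW := tsi_integrable_of_integral_eq_one hpW_prob
  have convA : ∀ y', Integrable (fun x => pX x * pW (y' - α • x)) :=
    tsi_conv_integrable hα hpX_diff hpWc (fun x => (hpX_pos x).le)
      (fun w => (hpW_pos w).le) hpX_int hpW_int hpX_prob hInt hDom
  set I : EuclideanSpace ℝ (Fin d) → EuclideanSpace ℝ (Fin d) :=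
    fun y' => ∫ x, pW (y' - α • x) • gradient pX x with hIdef
  have hIint : ∀ y', Integrable (fun x => pW (y' - α • x) • gradient pX x) := by
    intro y'
    refine (hInt y').mono' ?_ (Filter.Eventually.of_forall fun x => ?_)
    · exact ((hpWc.comp (continuous_const.sub (continuous_id.const_smul α))).smul
        hgradc).aestronglyMeasurable
    · exact le_of_eq (by
        rw [norm_smul, Real.norm_eq_abs, abs_of_nonneg (hpW_pos _).le, mul_comm])
  have hIcont : Continuous I := by
    rw [continuous_iff_continuousAt]
    intro y₀
    obtain ⟨ε, hε, g, hg, hbound⟩ := hDom y₀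
    refine continuousAt_of_dominated
      (Filter.Eventually.of_forall fun y' => (hIint y').aestronglyMeasurable) ?_ hg ?_
    · filter_upwards [Metric.ball_mem_nhds y₀ hε] with y' hy'
      refine Filter.Eventually.of_forall fun x => ?_
      rw [norm_smul, Real.norm_eq_abs, abs_of_nonneg (hpW_pos _).le, mul_comm]
      exact hbound y' (by simpa [Metric.mem_ball] using hy') x
    · refine Filter.Eventually.of_forall fun x => ?_
      exact ((hpWc.comp (continuous_id.sub continuous_const)).smul
        continuous_const).continuousAt
  have hpY_pos : 0 < pY y := by
    rw [hpY]
    refine (integral_pos_iff_support_of_nonneg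
      (fun x => mul_nonneg (hpX_pos x).le (hpW_pos _).le) (convA y)).mpr ?_
    have hsupp : Function.support (fun x => pX x * pW (y - α • x)) = Set.univ :=
      Set.eq_univ_of_forall fun x => (mul_pos (hpX_pos x) (hpW_pos _)).ne'
    rw [hsupp]
    exact lt_of_lt_of_le
      (Metric.measure_ball_pos volume (0 : EuclideanSpace ℝ (Fin d)) one_pos)
      (measure_mono (Set.subset_univ _))
  have hgradY : HasGradientAt pY (α⁻¹ • I y) y := by
    obtain ⟨ε, hε, g, hg, hbound⟩ := hDom y
    rw [hasGradientAt_iff_hasFDerivAt, hasFDerivAt_iff_isLittleO_nhds_zero,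
      Asymptotics.isLittleO_iff]
    intro c hc
    have hcα : 0 < c * |α| := mul_pos hc (abs_pos.mpr hα)
    obtain ⟨δ, hδ, hδI⟩ := Metric.continuousAt_iff.mp hIcont.continuousAt (c * |α|) hcα
    filter_upwards [Metric.ball_mem_nhds (0 : EuclideanSpace ℝ (Fin d))
      (lt_min hδ hε)] with h hh
    have hhδ : ‖h‖ < δ := lt_of_lt_of_le (mem_ball_zero_iff.mp hh) (min_le_left _ _)
    have hhε : ‖h‖ < ε := lt_of_lt_of_le (mem_ball_zero_iff.mp hh) (min_le_right _ _)
    set u : EuclideanSpace ℝ (Fin d) := α⁻¹ • h with hu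
    have hαu : α • u = h := by rw [hu, smul_smul, mul_inv_cancel₀ hα, one_smul]
    have harg2 : ∀ (ξ : ℝ) (x : EuclideanSpace ℝ (Fin d)),
        y + ξ • h - α • (x + ξ • u) = y - α • x := by
      intro ξ x
      rw [smul_add, smul_comm α ξ u, hαu]
      abel
    have hargu : ∀ x : EuclideanSpace ℝ (Fin d), y + h - α • (x + u) = y - α • x := by
      intro x
      rw [smul_add, hαu]
      abel
    have intA : Integrable (fun x => pX (x + u) * pW (y - α • x)) := by
      have h2 := (convA (y + h)).comp_add_right u
      refine h2.congr (Filter.Eventually.of_forall fun x => ?_)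
      simp only [hargu]
    have step1 : pY (y + h) = ∫ x, pX (x + u) * pW (y - α • x) := by
      rw [hpY, ← integral_add_right_eq_self (fun x => pX x * pW (y + h - α • x)) u]
      congr 1
      funext x
      simp only [hargu]
    have step2 : pY (y + h) - pY y = ∫ x, (pX (x + u) - pX x) * pW (y - α • x) := by
      rw [step1, hpY, ← integral_sub intA (convA y)]
      congr 1
      funext x
      ring
    have huε : ‖α • u‖ < ε := by rw [hαu]; exact hhε
    have prodInt := tsi_prod_integrable hpX_diff hpWc (fun w => (hpW_pos w).le)
      hInt hg hbound huε
    have step3 : (∫ x, (pX (x + u) - pX x) * pW (y - α • x))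
        = ∫ ξ in Set.Ioc (0:ℝ) 1,
            ∫ x, ⟪gradient pX (x + ξ • u), u⟫_ℝ * pW (y - α • x) := by
      have hswap := integral_integral_swap
        (f := fun (x : EuclideanSpace ℝ (Fin d)) (ξ : ℝ) =>
          ⟪gradient pX (x + ξ • u), u⟫_ℝ * pW (y - α • x))
        (μ := volume) (ν := volume.restrict (Set.Ioc (0:ℝ) 1)) prodInt.swap
      rw [← hswap]
      congr 1
      funext x
      rw [integral_mul_const, ← tsi_ftc hpX_diff x u]
    have step5 : ∀ ξ : ℝ, (∫ x, ⟪gradient pX (x + ξ • u), u⟫_ℝ * pW (y - α • x))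
        = ⟪I (y + ξ • h), u⟫_ℝ := by
      intro ξ
      have h2 := integral_add_right_eq_self (μ := (volume : Measure (EuclideanSpace ℝ (Fin d))))
        (fun x => ⟪gradient pX x, u⟫_ℝ * pW (y + ξ • h - α • x)) (ξ • u)
      have e1 : (∫ x, ⟪gradient pX (x + ξ • u), u⟫_ℝ * pW (y - α • x))
          = ∫ x, ⟪gradient pX x, u⟫_ℝ * pW (y + ξ • h - α • x) := by
        rw [← h2]
        congr 1
        funext x
        simp only [harg2]
      rw [e1, hIdef]
      rw [real_inner_comm, ← integral_inner (hIint (y + ξ • h)) u]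
      congr 1
      funext x
      rw [real_inner_smul_right u (gradient pX x) (pW (y + ξ • h - α • x)),
        real_inner_comm u (gradient pX x)]
      ring
    have hkey : pY (y + h) - pY y
        = ∫ ξ in Set.Ioc (0:ℝ) 1, ⟪I (y + ξ • h), u⟫_ℝ := by
      rw [step2, step3]
      simp only [step5]
    have htd : (toDual ℝ (EuclideanSpace ℝ (Fin d))) (α⁻¹ • I y) h = ⟪I y, u⟫_ℝ := by
      rw [toDual_apply_apply, hu, real_inner_smul_left, real_inner_smul_right]
    have hconst : ⟪I y, u⟫_ℝ = ∫ _ξ in Set.Ioc (0:ℝ) 1, ⟪I y, u⟫_ℝ := by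
      rw [setIntegral_const]
      simp [Real.volume_Ioc]
    have hint1 : IntegrableOn (fun ξ : ℝ => ⟪I (y + ξ • h), u⟫_ℝ) (Set.Ioc (0:ℝ) 1) := by
      apply Continuous.integrableOn_Ioc
      exact (hIcont.comp (continuous_const.add
        (continuous_id.smul continuous_const))).inner continuous_const
    have hdiff : pY (y + h) - pY y - (toDual ℝ (EuclideanSpace ℝ (Fin d))) (α⁻¹ • I y) h
        = ∫ ξ in Set.Ioc (0:ℝ) 1, ⟪I (y + ξ • h) - I y, u⟫_ℝ := by
      rw [hkey, htd, hconst,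
        ← integral_sub hint1 (integrableOn_const measure_Ioc_lt_top.ne)]
      congr 1
      funext ξ
      rw [inner_sub_left]
    rw [hdiff]
    have hbound2 : ∀ᵐ ξ ∂(volume.restrict (Set.Ioc (0:ℝ) 1)),
        ‖⟪I (y + ξ • h) - I y, u⟫_ℝ‖ ≤ c * |α| * ‖u‖ := by
      filter_upwards [ae_restrict_mem measurableSet_Ioc] with ξ hξ
      have hd : dist (y + ξ • h) y < δ := by
        have he : dist (y + ξ • h) y = ‖ξ • h‖ := by
          rw [dist_eq_norm]
          congr 1
          abel
        rw [he, norm_smul, Real.norm_eq_abs, abs_of_pos hξ.1]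
        calc ξ * ‖h‖ ≤ 1 * ‖h‖ := mul_le_mul_of_nonneg_right hξ.2 (norm_nonneg _)
          _ = ‖h‖ := one_mul _
          _ < δ := hhδ
      have hI2 : ‖I (y + ξ • h) - I y‖ ≤ c * |α| := by
        have h3 := hδI hd
        rw [dist_eq_norm] at h3
        exact h3.le
      calc ‖⟪I (y + ξ • h) - I y, u⟫_ℝ‖
          ≤ ‖I (y + ξ • h) - I y‖ * ‖u‖ := by
            rw [Real.norm_eq_abs]
            exact abs_real_inner_le_norm _ _
        _ ≤ c * |α| * ‖u‖ := mul_le_mul_of_nonneg_right hI2 (norm_nonneg _)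
    refine le_trans (norm_integral_le_of_norm_le
      (integrableOn_const measure_Ioc_lt_top.ne) hbound2) ?_
    rw [setIntegral_const]
    have hnu : ‖u‖ = |α|⁻¹ * ‖h‖ := by rw [hu, norm_smul, Real.norm_eq_abs, abs_inv]
    have hvol : volume.real (Set.Ioc (0:ℝ) 1) = 1 := by
      simp [Real.volume_Ioc]
    rw [hvol, one_smul, hnu]
    have hcancel : |α| * (|α|⁻¹ * ‖h‖) = ‖h‖ := by
      rw [← mul_assoc, mul_inv_cancel₀ (abs_ne_zero.mpr hα), one_mul]
    refine le_of_eq ?_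
    calc c * |α| * (|α|⁻¹ * ‖h‖) = c * (|α| * (|α|⁻¹ * ‖h‖)) := by ring
      _ = c * ‖h‖ := by rw [hcancel]
  have hlogY : gradient (fun y' => Real.log (pY y')) y = (pY y)⁻¹ • (α⁻¹ • I y) :=
    (tsi_log_grad hgradY hpY_pos.ne').gradient
  have hlogX : ∀ x, gradient (fun x' => Real.log (pX x')) x = (pX x)⁻¹ • gradient pX x :=
    fun x => (tsi_log_grad ((hpX_diff.differentiable one_ne_zero x).hasGradientAt)
      (hpX_pos x).ne').gradient
  have hintegrand : (fun x => pXgY x y • gradient (fun x' => Real.log (pX x')) x)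
      = fun x => (pY y)⁻¹ • (pW (y - α • x) • gradient pX x) := by
    funext x
    rw [hlogX, hpXgY, smul_smul, smul_smul]
    congr 1
    rw [div_mul_eq_mul_div, mul_comm (pX x) (pW (y - α • x)), mul_assoc,
      mul_inv_cancel₀ (hpX_pos x).ne', mul_one, div_eq_inv_mul]
  rw [hlogY, hintegrand, integral_smul, smul_comm]
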